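/- Let x₀ be a nonzero point of a d-dimensional real normed space X and O(x₀) = {T(x₀) : T ∈ Isolin(X)} its orbit under the linear isometry group. If O(x₀) equals the entire sphere S_{‖x₀‖}(0) (i.e., the linear isometry group acts transitively on spheres), then X is a Euclidean space (the norm comes from an inner product). Conversely, if X is Euclidean then O(x₀) = S_{‖x₀‖}(0). -/

import Mathlib

open MeasureTheory Topology

section Aux

variable (X : Type*) [NormedAddCommGroup X] [NormedSpace ℝ X] [FiniteDimensional ℝ X]

/-- The subgroup of units of `X →L[ℝ] X` consisting of isometries. -/
noncomputable def isomGroup : Subgroup (X →L[ℝ] X)ˣ where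
  carrier := {u | ∀ x : X, ‖(u : X →L[ℝ] X) x‖ = ‖x‖}
  one_mem' := by intro x; simp
  mul_mem' := by
    intro a b ha hb x
    rw [Units.val_mul, ContinuousLinearMap.mul_apply, ha, hb]
  inv_mem' := by
    intro u hu x
    calc ‖((u⁻¹ : _ˣ) : X →L[ℝ] X) x‖
        = ‖(u : X →L[ℝ] X) (((u⁻¹ : _ˣ) : X →L[ℝ] X) x)‖ := (hu _).symm
      _ = ‖((u * u⁻¹ : _ˣ) : X →L[ℝ] X) x‖ := by
          rw [Units.val_mul, ContinuousLinearMap.mul_apply]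
      _ = ‖x‖ := by rw [mul_inv_cancel]; simp

lemma isomGroup_compact : IsCompact ((isomGroup X : Set (X →L[ℝ] X)ˣ)) := by
  rw [Units.isEmbedding_embedProduct.isCompact_iff]
  have himage : Units.embedProduct _ '' (isomGroup X : Set (X →L[ℝ] X)ˣ) =
      {p : (X →L[ℝ] X) × (X →L[ℝ] X)ᵐᵒᵖ |
        p.1 * p.2.unop = 1 ∧ p.2.unop * p.1 = 1 ∧ ∀ x : X, ‖p.1 x‖ = ‖x‖} := by
    ext p
    constructor
    · rintro ⟨u, hu, rfl⟩
      exact ⟨u.val_inv, u.inv_val, hu⟩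
    · rintro ⟨h1, h2, h3⟩
      refine ⟨⟨p.1, p.2.unop, h1, h2⟩, h3, ?_⟩
      simp [Units.embedProduct]
  rw [himage]
  apply Metric.isCompact_of_isClosed_isBounded
  · simp only [Set.setOf_and, Set.setOf_forall]
    apply IsClosed.inter
    · exact isClosed_singleton.preimage
        (continuous_fst.mul (MulOpposite.continuous_unop.comp continuous_snd))
    apply IsClosed.inter
    · exact isClosed_singleton.preimage
        ((MulOpposite.continuous_unop.comp continuous_snd).mul continuous_fst)
    · refine isClosed_iInter fun x => isClosed_eq ?_ continuous_const
      exact ((ContinuousLinearMap.apply ℝ X x).continuous.comp continuous_fst).norm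
  · apply (Metric.isBounded_closedBall (x := (0 : X →L[ℝ] X)) (r := 1)).prod
      (Metric.isBounded_closedBall (x := (0 : (X →L[ℝ] X)ᵐᵒᵖ)) (r := 1)) |>.subset
    rintro p ⟨h1, h2, h3⟩
    have hinv : ∀ x : X, ‖p.2.unop x‖ = ‖x‖ := by
      intro x
      calc ‖p.2.unop x‖ = ‖p.1 (p.2.unop x)‖ := (h3 _).symm
        _ = ‖(p.1 * p.2.unop) x‖ := by rw [ContinuousLinearMap.mul_apply]
        _ = ‖x‖ := by rw [h1]; simp
    constructor
    · simp only [Metric.mem_closedBall, dist_zero_right]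
      exact ContinuousLinearMap.opNorm_le_bound _ zero_le_one fun x => by
        rw [h3, one_mul]
    · simp only [Metric.mem_closedBall, dist_zero_right]
      have : ‖p.2‖ = ‖p.2.unop‖ := rfl
      rw [this]
      exact ContinuousLinearMap.opNorm_le_bound _ zero_le_one fun x => by
        rw [hinv, one_mul]

end Aux

lemma stmt_18_para_of_inner (X : Type*) [NormedAddCommGroup X]
    (inst : InnerProductSpace ℝ X) :
    ∀ x y : X, ‖x + y‖ * ‖x + y‖ + ‖x - y‖ * ‖x - y‖ = 2 * (‖x‖ * ‖x‖ + ‖y‖ * ‖y‖) := by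
  letI := inst
  exact fun x y => by simpa only [sq] using parallelogram_law_with_norm ℝ x y

lemma stmt_18_sphere_subset (X : Type*) [NormedAddCommGroup X] [InnerProductSpace ℝ X]
    [FiniteDimensional ℝ X] (x₀ y : X) (hy : ‖y‖ = ‖x₀‖) :
    ∃ T : X →L[ℝ] X, Isometry T ∧ Function.Surjective T ∧ T x₀ = y := by
  refine ⟨(Submodule.reflection (ℝ ∙ (x₀ - y))ᗮ).toLinearIsometry.toContinuousLinearMap, ?_, ?_, ?_⟩
  · exact (Submodule.reflection (ℝ ∙ (x₀ - y))ᗮ).toLinearIsometry.isometry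
  · exact fun z => ⟨(Submodule.reflection (ℝ ∙ (x₀ - y))ᗮ).symm z, by simp⟩
  · show (Submodule.reflection (ℝ ∙ (x₀ - y))ᗮ) x₀ = y
    exact Submodule.reflection_sub hy.symm

lemma stmt_18_parallelogram (X : Type*) [NormedAddCommGroup X] [NormedSpace ℝ X]
    [FiniteDimensional ℝ X] (x₀ : X) (hx₀ : x₀ ≠ 0)
    (h : ∀ y : X, ‖y‖ = ‖x₀‖ →
      ∃ T : X →L[ℝ] X, Isometry T ∧ Function.Surjective T ∧ T x₀ = y) :
    ∀ x y : X, ‖x + y‖ * ‖x + y‖ + ‖x - y‖ * ‖x - y‖ = 2 * (‖x‖ * ‖x‖ + ‖y‖ * ‖y‖) := by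
  classical
  set A := X →L[ℝ] X with hA
  set S := isomGroup X with hSdef
  set G := ↥S with hG
  haveI : CompactSpace G := isCompact_iff_compactSpace.mp (isomGroup_compact X)
  letI : MeasurableSpace G := borel G
  haveI : BorelSpace G := ⟨rfl⟩
  set μ : Measure G := Measure.haar with hμ
  -- the quadratic form
  set f : X → G → ℝ := fun x g => ‖toEuclidean ((((g : Aˣ)⁻¹ : Aˣ) : A) x)‖ ^ 2 with hf
  set Q : X → ℝ := fun x => ∫ g : G, f x g ∂μ with hQ
  have hcont : ∀ x : X, Continuous (f x) := by
    intro x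
    have h1 : Continuous fun g : G => (((g : Aˣ)⁻¹ : Aˣ) : A) :=
      Units.continuous_val.comp (continuous_inv.comp continuous_subtype_val)
    exact (toEuclidean.continuous.comp
      ((ContinuousLinearMap.apply ℝ X x).continuous.comp h1)).norm.pow 2
  have hint : ∀ x : X, Integrable (f x) μ := by
    intro x
    exact (hcont x).integrable_of_hasCompactSupport
      ((isClosed_tsupport _).isCompact)
  -- invariance of Q under elements of S
  have hQinv : ∀ (u : G) (x : X), Q (((u : Aˣ) : A) x) = Q x := by
    intro u x
    have key : ∀ g : G, f (((u : Aˣ) : A) x) g = f x (u⁻¹ * g) := by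
      intro g
      simp only [hf]
      have hval : (((u⁻¹ * g : G) : Aˣ)⁻¹ : Aˣ) = (g : Aˣ)⁻¹ * (u : Aˣ) := by
        have h1 : ((u⁻¹ * g : G) : Aˣ) = ((u : Aˣ))⁻¹ * (g : Aˣ) := rfl
        rw [h1, mul_inv_rev, inv_inv]
      rw [hval, Units.val_mul, ContinuousLinearMap.mul_apply]
    calc Q (((u : Aˣ) : A) x) = ∫ g : G, f x (u⁻¹ * g) ∂μ := by
          simp only [hQ]; exact integral_congr_ae (Filter.Eventually.of_forall key)
      _ = ∫ g : G, f x g ∂μ := integral_mul_left_eq_self (f x) u⁻¹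
      _ = Q x := rfl
  -- homogeneity
  have hQsmul : ∀ (a : ℝ) (x : X), Q (a • x) = a ^ 2 * Q x := by
    intro a x
    have key : ∀ g : G, f (a • x) g = a ^ 2 * f x g := by
      intro g
      simp only [hf, _root_.map_smul, norm_smul, mul_pow, Real.norm_eq_abs, sq_abs]
    calc Q (a • x) = ∫ g : G, a ^ 2 * f x g ∂μ := by
          simp only [hQ]; exact integral_congr_ae (Filter.Eventually.of_forall key)
      _ = a ^ 2 * Q x := integral_const_mul _ _
  -- positivity
  have hQpos : 0 < Q x₀ := by
    have hposf : ∀ g : G, 0 < f x₀ g := by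
      intro g
      have hne : (((g : Aˣ)⁻¹ : Aˣ) : A) x₀ ≠ 0 := by
        intro hzero
        apply hx₀
        have : ((g : Aˣ) : A) ((((g : Aˣ)⁻¹ : Aˣ) : A) x₀) = x₀ := by
          rw [← ContinuousLinearMap.mul_apply, ← Units.val_mul, mul_inv_cancel]
          simp
        rw [hzero] at this
        simpa using this.symm
      have hne2 : toEuclidean ((((g : Aˣ)⁻¹ : Aˣ) : A) x₀) ≠ 0 := by
        simpa using hne
      exact pow_pos (norm_pos_iff.mpr hne2) 2
    obtain ⟨g₀, -, hg₀⟩ :=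
      isCompact_univ.exists_isMinOn ⟨(1 : G), trivial⟩ (hcont x₀).continuousOn
    have hc : 0 < f x₀ g₀ := hposf g₀
    have hμuniv : 0 < (μ Set.univ).toReal := by
      refine ENNReal.toReal_pos ?_ (measure_ne_top μ _)
      exact (isOpen_univ.measure_pos μ ⟨1, trivial⟩).ne'
    calc (0 : ℝ) < (μ Set.univ).toReal * f x₀ g₀ := by positivity
      _ = ∫ _ : G, f x₀ g₀ ∂μ := by rw [integral_const, smul_eq_mul]; rfl
      _ ≤ Q x₀ := integral_mono (integrable_const _) (hint x₀)
          (fun g => hg₀ (Set.mem_univ g))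
  -- parallelogram law for Q
  have hQpar : ∀ x y : X, Q (x + y) + Q (x - y) = 2 * Q x + 2 * Q y := by
    intro x y
    have key : ∀ g : G, f (x + y) g + f (x - y) g = 2 * f x g + 2 * f y g := by
      intro g
      simp only [hf, map_add, map_sub]
      set u := toEuclidean ((((g : Aˣ)⁻¹ : Aˣ) : A) x)
      set v := toEuclidean ((((g : Aˣ)⁻¹ : Aˣ) : A) y)
      have := parallelogram_law_with_norm ℝ u v
      nlinarith [this]
    calc Q (x + y) + Q (x - y) = ∫ g : G, (f (x + y) g + f (x - y) g) ∂μ :=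
          (integral_add (hint _) (hint _)).symm
      _ = ∫ g : G, (2 * f x g + 2 * f y g) ∂μ :=
          integral_congr_ae (Filter.Eventually.of_forall key)
      _ = 2 * Q x + 2 * Q y := by
          rw [integral_add ((hint x).const_mul 2) ((hint y).const_mul 2),
            integral_const_mul, integral_const_mul]
  -- Q x = k * ‖x‖²
  set k : ℝ := Q x₀ / (‖x₀‖ * ‖x₀‖) with hk
  have hknorm : ∀ x : X, Q x = k * (‖x‖ * ‖x‖) := by
    intro x
    by_cases hx : x = 0
    · subst hx
      simp only [norm_zero, mul_zero]
      have : Q 0 = Q ((2 : ℝ) • (0 : X)) := by rw [smul_zero]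
      rw [hQsmul] at this
      nlinarith [this]
    · set a : ℝ := ‖x₀‖ / ‖x‖ with ha
      have hxn : (0 : ℝ) < ‖x‖ := norm_pos_iff.mpr hx
      have hx₀n : (0 : ℝ) < ‖x₀‖ := norm_pos_iff.mpr hx₀
      have hapos : 0 < a := div_pos hx₀n hxn
      have hy : ‖a • x‖ = ‖x₀‖ := by
        rw [norm_smul, Real.norm_eq_abs, abs_of_pos hapos, ha, div_mul_cancel₀]
        exact hxn.ne'
      obtain ⟨T, hTiso, hTsurj, hTx⟩ := h (a • x) hy
      -- T as a linear isometry equiv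
      have hTnorm : ∀ z : X, ‖T z‖ = ‖z‖ :=
        fun z => hTiso.norm_map_of_map_zero (map_zero T) z
      set Tl : X →ₗᵢ[ℝ] X := ⟨(T : X →ₗ[ℝ] X), hTnorm⟩ with hTl
      set e : X ≃ₗᵢ[ℝ] X := LinearIsometryEquiv.ofSurjective Tl hTsurj with he
      have hecoe : ∀ z : X, e z = T z := fun z => rfl
      have hsymm : ∀ z : X, ((e.toContinuousLinearEquiv.symm : X →L[ℝ] X)) z = e.symm z :=
        fun z => rfl
      set u : Aˣ :=
        ⟨T, (e.toContinuousLinearEquiv.symm : X →L[ℝ] X),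
          by
            ext z
            show T (e.symm z) = z
            rw [← hecoe]
            exact e.apply_symm_apply z, by
            ext z
            show e.symm (T z) = z
            rw [← hecoe]
            exact e.symm_apply_apply z⟩ with hu
      have hmem : u ∈ S := hTnorm
      have h1 : Q (a • x) = Q x₀ := by
        have := hQinv ⟨u, hmem⟩ x₀
        simpa [hu, hTx] using this
      have h2 : Q (a • x) = a ^ 2 * Q x := hQsmul a x
      have : a ^ 2 * Q x = Q x₀ := by rw [← h2, h1]
      rw [hk]
      field_simp
      have hane : a ≠ 0 := hapos.ne'
      have : Q x = Q x₀ / a ^ 2 := by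
        field_simp at this ⊢
        linarith [this]
      rw [this, ha]
      field_simp
  -- conclude
  intro x y
  have h1 := hknorm (x + y)
  have h2 := hknorm (x - y)
  have h3 := hknorm x
  have h4 := hknorm y
  have h5 := hQpar x y
  have hkpos : 0 < k := by
    rw [hk]
    have hx₀n : (0 : ℝ) < ‖x₀‖ := norm_pos_iff.mpr hx₀
    positivity
  have : k * (‖x + y‖ * ‖x + y‖ + ‖x - y‖ * ‖x - y‖)
      = k * (2 * (‖x‖ * ‖x‖ + ‖y‖ * ‖y‖)) := by
    rw [mul_add, ← h1, ← h2, h5, h3, h4]; ring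
  exact mul_left_cancel₀ hkpos.ne' this

/-- The orbit of a nonzero point under the linear isometry group equals the whole sphere
iff the norm comes from an inner product. -/
theorem stmt_18 (X : Type*) [NormedAddCommGroup X] [NormedSpace ℝ X]
    [FiniteDimensional ℝ X] (x₀ : X) (hx₀ : x₀ ≠ 0) :
    {y : X | ∃ T : X →L[ℝ] X, Isometry T ∧ Function.Surjective T ∧ T x₀ = y}
        = Metric.sphere (0 : X) ‖x₀‖ ↔
      Nonempty (InnerProductSpace ℝ X) := by
  constructor
  · intro h
    refine ⟨InnerProductSpace.ofNorm ℝ (stmt_18_parallelogram X x₀ hx₀ ?_)⟩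
    intro y hy
    have : y ∈ Metric.sphere (0 : X) ‖x₀‖ := by
      simpa [mem_sphere_zero_iff_norm] using hy
    rw [← h] at this
    exact this
  · rintro ⟨inst⟩
    have hpar := stmt_18_para_of_inner X inst
    letI inst2 : InnerProductSpace ℝ X := InnerProductSpace.ofNorm ℝ hpar
    ext y
    simp only [Set.mem_setOf_eq, mem_sphere_zero_iff_norm]
    constructor
    · rintro ⟨T, hTiso, -, rfl⟩
      exact hTiso.norm_map_of_map_zero (map_zero T) x₀
    · intro hy
      exact @stmt_18_sphere_subset X _ inst2 ‹_› x₀ y hy
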